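/- arXiv:2509.08924 — 2 statements merged into one kernel-verified Lean document; each statement's English description precedes it below -/
import Mathlib

section
/- Let Φ : M_D(ℂ) → M_D(ℂ) be a positive trace-preserving linear map, and suppose that for some density matrix Z and constant c ∈ [0,1], we have ‖Φ(ρ) - Z‖₁ ≤ 2c for all density matrices ρ, and moreover |tr(Φ†(I)ρ)/tr(Φ†(I)) − tr(Z'ρ)| ≤ 2c for all density matrices ρ, where Z' is a positive semidefinite matrix with tr(Z') ≤ 1. Then for every density matrix ρ, ‖Φ(ρ)/tr(Φ†(I)) − tr(Z'ρ)·Z‖₁ ≤ 4c, where Φ† is the adjoint of Φ with respect to the Hilbert–Schmidt inner product. -/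
open Matrix
open scoped ComplexOrder

noncomputable def traceNorm {D : ℕ} (X : Matrix (Fin D) (Fin D) ℂ) : ℝ :=
  (((Matrix.posSemidef_conjTranspose_mul_self X).1.eigenvectorUnitary.1 *
    diagonal (((↑) : ℝ → ℂ) ∘ (Real.sqrt ·) ∘ (Matrix.posSemidef_conjTranspose_mul_self X).1.eigenvalues) *
    (star (Matrix.posSemidef_conjTranspose_mul_self X).1.eigenvectorUnitary :
      Matrix (Fin D) (Fin D) ℂ)).trace).re

def IsDensityMatrix {D : ℕ} (ρ : Matrix (Fin D) (Fin D) ℂ) : Prop :=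
  ρ.PosSemidef ∧ ρ.trace = 1

namespace TNaux
variable {D : ℕ}

open scoped MatrixOrder in
lemma traceNorm_eq_of (X Q : Matrix (Fin D) (Fin D) ℂ) (hQ : Q.PosSemidef)
    (hsq : Q ^ 2 = Xᴴ * X) : traceNorm X = (Q.trace).re := by
  have hM := Matrix.posSemidef_conjTranspose_mul_self X
  have h1 : (hM.1.eigenvectorUnitary.1 *
      diagonal (((↑) : ℝ → ℂ) ∘ (Real.sqrt ·) ∘ hM.1.eigenvalues) *
      (star hM.1.eigenvectorUnitary : Matrix (Fin D) (Fin D) ℂ)) = cfc Real.sqrt (Xᴴ * X) := by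
    rw [hM.1.cfc_eq]; rfl
  have h2 : cfc Real.sqrt (Xᴴ * X) = Q := by
    rw [← cfcₙ_eq_cfc, ← CFC.sqrt_eq_real_sqrt _ (Matrix.nonneg_iff_posSemidef.mpr hM)]
    exact CFC.sqrt_unique (by rw [← hsq, pow_two]) (Matrix.nonneg_iff_posSemidef.mpr hQ)
  rw [traceNorm, h1, h2]

open scoped MatrixOrder in
lemma psd_sqrt_exists (M : Matrix (Fin D) (Fin D) ℂ) (hM : M.PosSemidef) :
    ∃ S : Matrix (Fin D) (Fin D) ℂ, S.PosSemidef ∧ S ^ 2 = M :=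
  ⟨CFC.sqrt M, Matrix.nonneg_iff_posSemidef.mp (CFC.sqrt_nonneg M), by
    rw [pow_two]; exact CFC.sqrt_mul_sqrt_self M (Matrix.nonneg_iff_posSemidef.mpr hM)⟩

lemma star_eq (U : Matrix (Fin D) (Fin D) ℂ) : star U = Uᴴ := rfl

lemma conj_mul (U : Matrix (Fin D) (Fin D) ℂ) (hUU' : star U * U = 1)
    (e f : Fin D → ℂ) :
    (U * diagonal e * star U) * (U * diagonal f * star U)
      = U * diagonal (fun i => e i * f i) * star U := by
  have cancel : ∀ X : Matrix (Fin D) (Fin D) ℂ, star U * (U * X) = X := fun X => by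
    rw [← Matrix.mul_assoc, hUU', Matrix.one_mul]
  simp only [Matrix.mul_assoc]
  rw [cancel, ← Matrix.mul_assoc (diagonal e) (diagonal f) (star U), diagonal_mul_diagonal]

lemma trace_conj (U : Matrix (Fin D) (Fin D) ℂ) (hUU' : star U * U = 1)
    (g : Fin D → ℂ) : (U * diagonal g * star U).trace = ∑ i, g i := by
  rw [Matrix.trace_mul_comm, ← Matrix.mul_assoc, hUU', Matrix.one_mul, trace_diagonal]

lemma conj_psd (U : Matrix (Fin D) (Fin D) ℂ) {g : Fin D → ℝ} (hg : ∀ i, 0 ≤ g i) :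
    (U * diagonal (fun i => ((g i : ℝ) : ℂ)) * star U).PosSemidef := by
  rw [star_eq]
  refine PosSemidef.mul_mul_conjTranspose_same (PosSemidef.diagonal fun i => ?_) U
  show (0:ℂ) ≤ _
  exact_mod_cast hg i

lemma spectral (A : Matrix (Fin D) (Fin D) ℂ) (hA : A.IsHermitian) :
    A = (hA.eigenvectorUnitary : Matrix (Fin D) (Fin D) ℂ)
        * diagonal (fun i => ((hA.eigenvalues i : ℝ) : ℂ))
        * star (hA.eigenvectorUnitary : Matrix (Fin D) (Fin D) ℂ) := by
  have := hA.spectral_theorem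
  rw [Unitary.conjStarAlgAut_apply] at this
  exact this

lemma psd_entry_nonneg {M : Matrix (Fin D) (Fin D) ℂ} (h : M.PosSemidef) (i : Fin D) :
    0 ≤ M i i := by
  have := h.dotProduct_mulVec_nonneg (Pi.single i 1)
  simpa [dotProduct, mulVec, Pi.single_apply] using this

lemma psd_smul {M : Matrix (Fin D) (Fin D) ℂ} (h : M.PosSemidef) {r : ℝ} (hr : 0 ≤ r) :
    ((r : ℂ) • M).PosSemidef := by
  refine PosSemidef.of_dotProduct_mulVec_nonneg ?_ ?_
  · show ((r:ℂ) • M)ᴴ = (r:ℂ) • M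
    rw [conjTranspose_smul, h.1]
    simp [Complex.star_def, Complex.conj_ofReal]
  · intro x
    have h0 : (0:ℂ) ≤ (r:ℂ) := by exact_mod_cast hr
    calc (0:ℂ) ≤ (r:ℂ) * (star x ⬝ᵥ M *ᵥ x) := mul_nonneg h0 (h.dotProduct_mulVec_nonneg x)
      _ = star x ⬝ᵥ ((r:ℂ) • M) *ᵥ x := by
          rw [smul_mulVec, dotProduct_smul, smul_eq_mul]

lemma traceNorm_herm {A : Matrix (Fin D) (Fin D) ℂ} (hA : A.IsHermitian) :
    traceNorm A = ∑ i, |hA.eigenvalues i| := by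
  classical
  set U : Matrix (Fin D) (Fin D) ℂ := (hA.eigenvectorUnitary : Matrix (Fin D) (Fin D) ℂ) with hU
  have hUU' : star U * U = 1 := mem_unitaryGroup_iff'.mp hA.eigenvectorUnitary.2
  set d : Fin D → ℝ := hA.eigenvalues with hd
  set Q : Matrix (Fin D) (Fin D) ℂ := U * diagonal (fun i => ((|d i| : ℝ) : ℂ)) * star U with hQ
  have hQpsd : Q.PosSemidef := conj_psd U (fun i => abs_nonneg (d i))
  have hspec : A = U * diagonal (fun i => ((d i : ℝ) : ℂ)) * star U := spectral A hA
  have hsq : Q ^ 2 = Aᴴ * A := by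
    have hAA : Aᴴ * A = A * A := by rw [hA.eq]
    rw [hAA, pow_two, hQ, conj_mul U hUU']
    conv_rhs => rw [hspec]
    rw [conj_mul U hUU']
    have : (fun i => ((|d i| : ℝ):ℂ) * ((|d i| : ℝ):ℂ))
        = fun i => ((d i : ℝ):ℂ) * ((d i : ℝ):ℂ) := by
      funext i
      rw [← Complex.ofReal_mul, ← Complex.ofReal_mul, abs_mul_abs_self]
    rw [this]
  have hsqrt : traceNorm A = (Q.trace).re := traceNorm_eq_of A Q hQpsd hsq
  rw [hsqrt, hQ, trace_conj U hUU', Complex.re_sum]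
  simp

lemma traceNorm_real_smul (A : Matrix (Fin D) (Fin D) ℂ) (r : ℝ) :
    traceNorm ((r : ℂ) • A) = |r| * traceNorm A := by
  obtain ⟨S, hSpsd, hSsq⟩ := psd_sqrt_exists _ (Matrix.posSemidef_conjTranspose_mul_self A)
  have hS : traceNorm A = (S.trace).re := traceNorm_eq_of A S hSpsd hSsq
  have hQpsd : (((|r| : ℝ) : ℂ) • S).PosSemidef := psd_smul hSpsd (abs_nonneg r)
  have hsq : (((|r| : ℝ) : ℂ) • S) ^ 2 = ((r:ℂ) • A)ᴴ * ((r:ℂ) • A) := by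
    rw [smul_pow, hSsq, conjTranspose_smul, Matrix.smul_mul, Matrix.mul_smul, smul_smul]
    congr 1
    rw [Complex.star_def, Complex.conj_ofReal, ← Complex.ofReal_mul, ← Complex.ofReal_pow,
      sq_abs]
    norm_num [sq]
  have hsqrt : traceNorm ((r:ℂ) • A) = ((((|r| : ℝ) : ℂ) • S).trace).re :=
    traceNorm_eq_of _ _ hQpsd hsq
  rw [hsqrt, trace_smul, hS]
  simp

lemma traceNorm_psd {Z : Matrix (Fin D) (Fin D) ℂ} (hZ : Z.PosSemidef) :
    traceNorm Z = (Z.trace).re := by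
  have hsq : Z ^ 2 = Zᴴ * Z := by rw [hZ.1.eq, pow_two]
  exact traceNorm_eq_of Z Z hZ hsq


lemma re_trace_mul_le {A Y : Matrix (Fin D) (Fin D) ℂ} (hA : A.IsHermitian)
    (hY1 : (1 - Y).PosSemidef) (hY2 : (1 + Y).PosSemidef) :
    ((A * Y).trace).re ≤ traceNorm A := by
  classical
  set U : Matrix (Fin D) (Fin D) ℂ := (hA.eigenvectorUnitary : Matrix (Fin D) (Fin D) ℂ) with hU
  have hUU' : star U * U = 1 := mem_unitaryGroup_iff'.mp hA.eigenvectorUnitary.2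
  set d : Fin D → ℝ := hA.eigenvalues with hd
  have hspec : A = U * diagonal (fun i => ((d i : ℝ) : ℂ)) * star U := spectral A hA
  set M : Matrix (Fin D) (Fin D) ℂ := star U * Y * U with hM
  have htr : (A * Y).trace = (diagonal (fun i => ((d i : ℝ) : ℂ)) * M).trace := by
    rw [hspec, Matrix.mul_assoc, Matrix.trace_mul_comm, ← Matrix.mul_assoc,
      Matrix.trace_mul_comm, hM]
  have p1 : (1 - M).PosSemidef := by
    have h := hY1.conjTranspose_mul_mul_same U
    rw [← star_eq] at h
    have e : star U * (1 - Y) * U = 1 - M := by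
      rw [Matrix.mul_sub, Matrix.mul_one, Matrix.sub_mul, hUU', hM]
    rwa [e] at h
  have p2 : (1 + M).PosSemidef := by
    have h := hY2.conjTranspose_mul_mul_same U
    rw [← star_eq] at h
    have e : star U * (1 + Y) * U = 1 + M := by
      rw [Matrix.mul_add, Matrix.mul_one, Matrix.add_mul, hUU', hM]
    rwa [e] at h
  have hMentry : ∀ i, |(M i i).re| ≤ 1 := by
    intro i
    have e1 := psd_entry_nonneg p1 i
    have e2 := psd_entry_nonneg p2 i
    rw [Complex.le_def] at e1 e2
    have g1 := e1.1
    have g2 := e2.1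
    simp only [Matrix.sub_apply, Matrix.add_apply, Matrix.one_apply_eq, Complex.sub_re,
      Complex.add_re, Complex.one_re, Complex.zero_re] at g1 g2
    rw [abs_le]; constructor <;> linarith
  rw [htr, traceNorm_herm hA, ← hd, Matrix.trace, Complex.re_sum]
  have hdiag : ∀ i, ((diagonal (fun i => ((d i : ℝ) : ℂ)) * M).diag i).re
      = d i * (M i i).re := by
    intro i
    show ((diagonal (fun i => ((d i : ℝ) : ℂ)) * M) i i).re = _
    rw [Matrix.diagonal_mul]
    simp [Complex.mul_re]
  calc ∑ i, ((diagonal (fun i => ((d i : ℝ) : ℂ)) * M).diag i).re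
      = ∑ i, d i * (M i i).re := Finset.sum_congr rfl fun i _ => hdiag i
    _ ≤ ∑ i, |d i| := by
        refine Finset.sum_le_sum fun i _ => ?_
        calc d i * (M i i).re ≤ |d i * (M i i).re| := le_abs_self _
          _ = |d i| * |(M i i).re| := abs_mul _ _
          _ ≤ |d i| * 1 := mul_le_mul_of_nonneg_left (hMentry i) (abs_nonneg _)
          _ = |d i| := mul_one _

lemma traceNorm_add_le {A B : Matrix (Fin D) (Fin D) ℂ}
    (hA : A.IsHermitian) (hB : B.IsHermitian) :
    traceNorm (A + B) ≤ traceNorm A + traceNorm B := by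
  classical
  have hC : (A + B).IsHermitian := hA.add hB
  set U : Matrix (Fin D) (Fin D) ℂ := (hC.eigenvectorUnitary : Matrix (Fin D) (Fin D) ℂ) with hU
  have hUU : U * star U = 1 := mem_unitaryGroup_iff.mp hC.eigenvectorUnitary.2
  have hUU' : star U * U = 1 := mem_unitaryGroup_iff'.mp hC.eigenvectorUnitary.2
  set d : Fin D → ℝ := hC.eigenvalues with hd
  set s : Fin D → ℝ := fun i => if 0 ≤ d i then 1 else -1 with hs
  set Y : Matrix (Fin D) (Fin D) ℂ := U * diagonal (fun i => ((s i : ℝ) : ℂ)) * star U with hY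
  have hone : (1 : Matrix (Fin D) (Fin D) ℂ)
      = U * diagonal (fun _ => ((1 : ℝ) : ℂ)) * star U := by
    have h1 : (fun _ : Fin D => ((1:ℝ):ℂ)) = fun _ => (1:ℂ) := by funext i; norm_num
    rw [h1, diagonal_one, Matrix.mul_one, hUU]
  have hY1 : (1 - Y).PosSemidef := by
    have e : (1 : Matrix (Fin D) (Fin D) ℂ) - Y
        = U * diagonal (fun i => ((1 - s i : ℝ) : ℂ)) * star U := by
      rw [hone, hY, ← Matrix.sub_mul, ← Matrix.mul_sub, diagonal_sub]
      congr 2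
      funext i
      push_cast
      ring
    rw [e]
    refine conj_psd U fun i => ?_
    rw [hs]; dsimp only; split <;> norm_num
  have hY2 : (1 + Y).PosSemidef := by
    have e : (1 : Matrix (Fin D) (Fin D) ℂ) + Y
        = U * diagonal (fun i => ((1 + s i : ℝ) : ℂ)) * star U := by
      rw [hone, hY, ← Matrix.add_mul, ← Matrix.mul_add, diagonal_add]
      congr 2
      funext i
      push_cast
      ring
    rw [e]
    refine conj_psd U fun i => ?_
    rw [hs]; dsimp only; split <;> norm_num
  have hspec : A + B = U * diagonal (fun i => ((d i : ℝ) : ℂ)) * star U := spectral _ hC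
  have hCY : (((A + B) * Y).trace).re = traceNorm (A + B) := by
    rw [traceNorm_herm hC, ← hd, hspec, hY, conj_mul U hUU', trace_conj U hUU',
      Complex.re_sum]
    refine Finset.sum_congr rfl fun i _ => ?_
    rw [← Complex.ofReal_mul, Complex.ofReal_re]
    rw [hs]; dsimp only; split <;> rename_i h
    · rw [abs_of_nonneg h]; ring
    · rw [abs_of_neg (lt_of_not_ge h)]; ring
  have hsplit : (((A + B) * Y).trace).re = ((A * Y).trace).re + ((B * Y).trace).re := by
    rw [Matrix.add_mul, trace_add, Complex.add_re]
  have bA := re_trace_mul_le hA hY1 hY2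
  have bB := re_trace_mul_le hB hY1 hY2
  linarith

lemma herm_real_smul {M : Matrix (Fin D) (Fin D) ℂ} (h : M.IsHermitian) (r : ℝ) :
    ((r : ℂ) • M).IsHermitian := by
  show ((r:ℂ) • M)ᴴ = (r:ℂ) • M
  rw [conjTranspose_smul, h.eq]
  simp [Complex.star_def, Complex.conj_ofReal]


end TNaux

open TNaux in
theorem stmt_6 {D : ℕ}
    (Φ Φd : Matrix (Fin D) (Fin D) ℂ →ₗ[ℂ] Matrix (Fin D) (Fin D) ℂ)
    (hpos : ∀ A : Matrix (Fin D) (Fin D) ℂ, A.PosSemidef → (Φ A).PosSemidef)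
    (htp : ∀ A : Matrix (Fin D) (Fin D) ℂ, (Φ A).trace = A.trace)
    -- Φd is the Hilbert–Schmidt adjoint of Φ
    (hadj : ∀ A B : Matrix (Fin D) (Fin D) ℂ, ((Φ A)ᴴ * B).trace = (Aᴴ * Φd B).trace)
    (Z Z' : Matrix (Fin D) (Fin D) ℂ) (hZ : IsDensityMatrix Z)
    (hZ' : Z'.PosSemidef) (hZ'tr : (Z'.trace).re ≤ 1)
    (c : ℝ) (hc0 : 0 ≤ c) (hc1 : c ≤ 1)
    (h1 : ∀ ρ : Matrix (Fin D) (Fin D) ℂ, IsDensityMatrix ρ →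
      traceNorm (Φ ρ - Z) ≤ 2 * c)
    (h2 : ∀ ρ : Matrix (Fin D) (Fin D) ℂ, IsDensityMatrix ρ →
      |((Φd 1 * ρ).trace).re / ((Φd 1).trace).re - ((Z' * ρ).trace).re| ≤ 2 * c) :
    ∀ ρ : Matrix (Fin D) (Fin D) ℂ, IsDensityMatrix ρ →
      traceNorm ((((((Φd 1).trace).re)⁻¹ : ℝ) : ℂ) • Φ ρ
        - ((((Z' * ρ).trace).re : ℝ) : ℂ) • Z) ≤ 4 * c := by
  intro ρ hρ
  -- trace of Φd 1 equals D
  have hT : (Φd 1).trace = (D : ℂ) := by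
    have h := hadj 1 1
    rw [Matrix.mul_one, Matrix.conjTranspose_one, Matrix.one_mul] at h
    have hΦ1 : (Φ 1).PosSemidef := hpos 1 Matrix.PosSemidef.one
    rw [hΦ1.1.eq, htp 1, Matrix.trace_one] at h
    rw [← h]
    norm_num
  -- trace of Φd 1 * ρ equals 1
  have hTρ : (Φd 1 * ρ).trace = 1 := by
    have h := hadj ρ 1
    rw [Matrix.mul_one, hρ.1.1.eq] at h
    rw [(hpos ρ hρ.1).1.eq, htp ρ, hρ.2] at h
    rw [Matrix.trace_mul_comm, ← h]
  -- D is positive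
  have hD : 0 < D := by
    by_contra h
    push_neg at h
    interval_cases D
    have := hρ.2
    have h0 : ρ.trace = 0 := by
      rw [Matrix.trace]
      exact Finset.sum_empty
    rw [h0] at this
    exact one_ne_zero this.symm
  set a : ℝ := (((Φd 1).trace).re)⁻¹ with ha
  have haD : a = (D : ℝ)⁻¹ := by rw [ha, hT]; norm_num
  have ha0 : 0 ≤ a := by rw [haD]; positivity
  have ha1 : a ≤ 1 := by
    rw [haD]
    exact inv_le_one_of_one_le₀ (by exact_mod_cast hD)
  set t : ℝ := ((Z' * ρ).trace).re with hts
  -- h2 gives |a - t| ≤ 2c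
  have hat : |a - t| ≤ 2 * c := by
    have := h2 ρ hρ
    rw [hTρ, hT] at this
    simpa [haD, one_div] using this
  -- decomposition
  have hdecomp : ((a : ℝ) : ℂ) • Φ ρ - ((t : ℝ) : ℂ) • Z
      = ((a : ℝ) : ℂ) • (Φ ρ - Z) + (((a - t) : ℝ) : ℂ) • Z := by
    rw [smul_sub, Complex.ofReal_sub, sub_smul]
    abel
  rw [hdecomp]
  have hermΦZ : (Φ ρ - Z).IsHermitian := ((hpos ρ hρ.1).1).sub hZ.1.1
  have htri := traceNorm_add_le (herm_real_smul hermΦZ a) (herm_real_smul hZ.1.1 (a - t))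
  have b1 : traceNorm (((a : ℝ) : ℂ) • (Φ ρ - Z)) ≤ 2 * c := by
    rw [traceNorm_real_smul, abs_of_nonneg ha0]
    calc a * traceNorm (Φ ρ - Z) ≤ a * (2 * c) := by
          exact mul_le_mul_of_nonneg_left (h1 ρ hρ) ha0
      _ ≤ 1 * (2 * c) := by
          exact mul_le_mul_of_nonneg_right ha1 (by linarith)
      _ = 2 * c := one_mul _
  have b2 : traceNorm ((((a - t) : ℝ) : ℂ) • Z) ≤ 2 * c := by
    rw [traceNorm_real_smul, traceNorm_psd hZ.1, hZ.2]
    simpa using hat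
  linarith
end

section
/- Let Φ : M_D(ℂ) → M_D(ℂ) be a strictly positive (i.e., mapping nonzero positive semidefinite matrices to positive definite matrices) linear map. Then Φ has a right eigenmatrix R which is a positive definite density matrix, with eigenvalue equal to the spectral radius λ of Φ: Φ(R) = λR, and λ > 0. -/
open Matrix
open scoped ComplexOrder

namespace PF10

variable {D : ℕ}

/-- The quadratic form of a matrix. -/
noncomputable def q (A : Matrix (Fin D) (Fin D) ℂ) (x : Fin D → ℂ) : ℂ := star x ⬝ᵥ A.mulVec x

lemma star_q (A : Matrix (Fin D) (Fin D) ℂ) (x : Fin D → ℂ) : star (q A x) = q Aᴴ x := by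
  unfold q
  rw [star_dotProduct, star_star, star_mulVec, ← dotProduct_mulVec]

lemma q_im {A : Matrix (Fin D) (Fin D) ℂ} (hA : A.IsHermitian) (x : Fin D → ℂ) :
    (q A x).im = 0 := by
  have h := star_q A x
  rw [hA.eq] at h
  rw [← Complex.conj_eq_iff_im]
  exact h

lemma psd_q_nonneg {P : Matrix (Fin D) (Fin D) ℂ} (hP : P.PosSemidef) (x : Fin D → ℂ) :
    0 ≤ q P x := hP.dotProduct_mulVec_nonneg x

lemma psd_q_re_nonneg {P : Matrix (Fin D) (Fin D) ℂ} (hP : P.PosSemidef) (x : Fin D → ℂ) :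
    0 ≤ (q P x).re := by
  have := hP.dotProduct_mulVec_nonneg x
  rw [Complex.le_def] at this
  exact this.1

lemma q_sub (A B : Matrix (Fin D) (Fin D) ℂ) (x : Fin D → ℂ) :
    q (A - B) x = q A x - q B x := by
  unfold q
  rw [sub_mulVec, dotProduct_sub]

lemma q_add (A B : Matrix (Fin D) (Fin D) ℂ) (x : Fin D → ℂ) :
    q (A + B) x = q A x + q B x := by
  unfold q
  rw [add_mulVec, dotProduct_add]

lemma q_smul (c : ℂ) (A : Matrix (Fin D) (Fin D) ℂ) (x : Fin D → ℂ) :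
    q (c • A) x = c * q A x := by
  unfold q
  rw [smul_mulVec, dotProduct_smul, smul_eq_mul]

/-- Hermitian + nonneg real part of quadratic form implies PSD. -/
lemma posSemidef_of_re {A : Matrix (Fin D) (Fin D) ℂ} (hA : A.IsHermitian)
    (h : ∀ x, 0 ≤ (q A x).re) : A.PosSemidef := by
  refine PosSemidef.of_dotProduct_mulVec_nonneg hA fun x => ?_
  rw [Complex.le_def]
  exact ⟨h x, (q_im hA x).symm⟩

lemma herm_real_smul {B : Matrix (Fin D) (Fin D) ℂ} (hB : B.IsHermitian) (r : ℝ) :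
    (((r:ℂ)) • B).IsHermitian := by
  unfold Matrix.IsHermitian
  rw [conjTranspose_smul, hB.eq, Complex.star_def, Complex.conj_ofReal]

lemma psd_smul {P : Matrix (Fin D) (Fin D) ℂ} (hP : P.PosSemidef) {r : ℝ} (hr : 0 ≤ r) :
    ((r : ℂ) • P).PosSemidef := by
  refine posSemidef_of_re (herm_real_smul hP.1 r) fun x => ?_
  rw [q_smul, Complex.re_ofReal_mul]
  exact mul_nonneg hr (psd_q_re_nonneg hP x)

lemma pd_smul {P : Matrix (Fin D) (Fin D) ℂ} (hP : P.PosDef) {r : ℝ} (hr : 0 < r) :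
    ((r : ℂ) • P).PosDef := by
  refine PosDef.of_dotProduct_mulVec_pos (psd_smul hP.posSemidef hr.le).1 fun x hx => ?_
  have h1 : (0:ℂ) < star x ⬝ᵥ P.mulVec x := hP.dotProduct_mulVec_pos hx
  have h2 : star x ⬝ᵥ ((r:ℂ) • P).mulVec x = (r:ℂ) * (star x ⬝ᵥ P.mulVec x) := q_smul r P x
  rw [h2]
  have hr' : (0:ℂ) < (r:ℂ) := by exact_mod_cast hr
  exact mul_pos hr' h1

/-- test vector for polarization -/
def pvec (i j : Fin D) (a : ℂ) : Fin D → ℂ :=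
  (Pi.single i 1 : Fin D → ℂ) + a • (Pi.single j 1 : Fin D → ℂ)

lemma q_single_pair (A : Matrix (Fin D) (Fin D) ℂ) (i j : Fin D) (a : ℂ) :
    q A (pvec i j a)
      = A i i + a * A i j + star a * A j i + star a * a * A j j := by
  unfold q pvec
  simp [mulVec_add, mulVec_smul, mulVec_single, dotProduct_add, add_dotProduct,
    smul_dotProduct, dotProduct_smul, single_dotProduct, star_add, star_smul,
    ← Pi.single_star, smul_eq_mul]
  ring

lemma q_single (A : Matrix (Fin D) (Fin D) ℂ) (i : Fin D) :
    q A (Pi.single i 1) = A i i := by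
  simp [q, mulVec_single, ← Pi.single_star, single_dotProduct]

lemma four_entry (A : Matrix (Fin D) (Fin D) ℂ) (i j : Fin D) :
    (4:ℂ) * A i j
      = (q A (pvec i j 1) - q A (pvec i j (-1)))
        + Complex.I * (q A (pvec i j (-Complex.I)) - q A (pvec i j Complex.I)) := by
  rw [q_single_pair, q_single_pair, q_single_pair, q_single_pair]
  simp only [star_one, star_neg, Complex.star_def, Complex.conj_I, _root_.map_one]
  linear_combination (2*A i j - 2*A j i) * Complex.I_mul_I

lemma abs_q_le {S A : Matrix (Fin D) (Fin D) ℂ} (hA : A.IsHermitian)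
    (h1 : (S - A).PosSemidef) (h2 : (S + A).PosSemidef) (x : Fin D → ℂ) :
    ‖q A x‖ ≤ (q S x).re := by
  have him : (q A x).im = 0 := q_im hA x
  have habs : ‖q A x‖ = |(q A x).re| := by
    have h : q A x = ((q A x).re : ℂ) := Complex.ext rfl him
    rw [h, Complex.norm_real, Real.norm_eq_abs, Complex.ofReal_re]
  rw [habs, abs_le]
  have e1 := psd_q_re_nonneg h1 x
  have e2 := psd_q_re_nonneg h2 x
  rw [q_sub] at e1
  rw [q_add] at e2
  rw [Complex.sub_re] at e1
  rw [Complex.add_re] at e2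
  constructor <;> linarith

lemma entry_bound {S A : Matrix (Fin D) (Fin D) ℂ} (hS : S.PosSemidef) (hA : A.IsHermitian)
    (h1 : (S - A).PosSemidef) (h2 : (S + A).PosSemidef) (i j : Fin D) :
    ‖A i j‖ ≤ (q S (pvec i j 1)).re + (q S (pvec i j (-1))).re
      + (q S (pvec i j (-Complex.I))).re + (q S (pvec i j Complex.I)).re := by
  have h4 := four_entry A i j
  have habs : (4:ℝ) * ‖A i j‖ = ‖(4:ℂ) * A i j‖ := by
    rw [norm_mul]; norm_num
  have T1 := abs_q_le hA h1 h2 (pvec i j 1)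
  have T2 := abs_q_le hA h1 h2 (pvec i j (-1))
  have T3 := abs_q_le hA h1 h2 (pvec i j (-Complex.I))
  have T4 := abs_q_le hA h1 h2 (pvec i j Complex.I)
  have N1 := psd_q_re_nonneg hS (pvec i j 1)
  have N2 := psd_q_re_nonneg hS (pvec i j (-1))
  have N3 := psd_q_re_nonneg hS (pvec i j (-Complex.I))
  have N4 := psd_q_re_nonneg hS (pvec i j Complex.I)
  have tri : ‖(4:ℂ) * A i j‖
      ≤ ‖q A (pvec i j 1)‖ + ‖q A (pvec i j (-1))‖
        + ‖q A (pvec i j (-Complex.I))‖ + ‖q A (pvec i j Complex.I)‖ := by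
    rw [h4]
    calc ‖(q A (pvec i j 1) - q A (pvec i j (-1)))
          + Complex.I * (q A (pvec i j (-Complex.I)) - q A (pvec i j Complex.I))‖
        ≤ ‖q A (pvec i j 1) - q A (pvec i j (-1))‖
          + ‖Complex.I * (q A (pvec i j (-Complex.I)) - q A (pvec i j Complex.I))‖ :=
          norm_add_le _ _
      _ ≤ _ := by
          rw [norm_mul, Complex.norm_I, one_mul]
          have h5 := norm_add_le (q A (pvec i j 1)) (-(q A (pvec i j (-1))))
          have h6 := norm_add_le (q A (pvec i j (-Complex.I))) (-(q A (pvec i j Complex.I)))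
          simp only [← sub_eq_add_neg, norm_neg] at h5 h6
          linarith
  linarith [norm_nonneg (A i j)]

lemma continuous_q_right (A : Matrix (Fin D) (Fin D) ℂ) :
    Continuous fun x : Fin D → ℂ => q A x := by
  simp only [q, dotProduct, Matrix.mulVec, Pi.star_apply]
  refine continuous_finset_sum _ fun i _ => Continuous.mul ?_ ?_
  · exact (continuous_apply i).star
  · exact continuous_finset_sum _ fun j _ => continuous_const.mul (continuous_apply j)

lemma q_zero (A : Matrix (Fin D) (Fin D) ℂ) : q A 0 = 0 := by
  simp [q]

lemma q_real_scale (M : Matrix (Fin D) (Fin D) ℂ) (t : ℝ) (u : Fin D → ℂ) :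
    (q M ((t:ℂ) • u)).re = t^2 * (q M u).re := by
  have h : q M ((t:ℂ) • u) = ((t^2 : ℝ) : ℂ) * q M u := by
    unfold q
    rw [star_smul, smul_dotProduct, mulVec_smul, dotProduct_smul]
    simp only [smul_eq_mul, Complex.star_def, Complex.conj_ofReal]
    push_cast
    ring
  rw [h, Complex.re_ofReal_mul]

lemma exists_eps (hD : 0 < D) {A B : Matrix (Fin D) (Fin D) ℂ}
    (hA : A.PosDef) (hB : B.IsHermitian) :
    ∃ ε : ℝ, 0 < ε ∧ (A - (ε:ℂ) • B).PosSemidef ∧ (A + (ε:ℂ) • B).PosSemidef := by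
  set Sp := Metric.sphere (0 : Fin D → ℂ) 1 with hSp
  have hcomp : IsCompact Sp := isCompact_sphere _ _
  have hne : Sp.Nonempty := by
    refine ⟨Pi.single ⟨0, hD⟩ 1, ?_⟩
    rw [hSp, mem_sphere_zero_iff_norm, Pi.norm_single, norm_one]
  obtain ⟨x₀, hx₀S, hx₀min⟩ := hcomp.exists_isMinOn hne
    ((Complex.continuous_re.comp (continuous_q_right A)).continuousOn)
  obtain ⟨y₀, hy₀S, hy₀max⟩ := hcomp.exists_isMaxOn hne
    (((Complex.continuous_re.comp (continuous_q_right B)).abs).continuousOn)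
  set c := (q A x₀).re with hc
  set b := |(q B y₀).re| with hb
  have hx₀ne : x₀ ≠ 0 := by
    intro h
    rw [hSp, mem_sphere_zero_iff_norm, h, norm_zero] at hx₀S
    norm_num at hx₀S
  have hcpos : 0 < c := by
    have := hA.dotProduct_mulVec_pos hx₀ne
    rw [Complex.lt_def] at this
    simpa [hc, q] using this.1
  have hbnn : 0 ≤ b := abs_nonneg _
  refine ⟨c / (b + 1), div_pos hcpos (by linarith), ?_, ?_⟩
  all_goals {
    set ε := c / (b + 1) with hε
    have hεpos : 0 < ε := div_pos hcpos (by linarith)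
    have key : ∀ x : Fin D → ℂ, ε * |(q B x).re| ≤ (q A x).re := by
      intro x
      by_cases hx : x = 0
      · simp [hx, q_zero]
      · set t := ‖x‖ with ht
        have htpos : 0 < t := norm_pos_iff.mpr hx
        set u := ((t⁻¹ : ℝ) : ℂ) • x with hu
        have huS : u ∈ Sp := by
          rw [hSp, mem_sphere_zero_iff_norm, hu, norm_smul]
          simp [ht, norm_inv, inv_mul_cancel₀ htpos.ne', inv_mul_cancel₀ (norm_ne_zero_iff.mpr hx)]
        have hxu : x = (t : ℂ) • u := by
          rw [hu, smul_smul]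
          norm_cast
          rw [mul_inv_cancel₀ htpos.ne', one_smul]
        have hqa : (q A x).re = t^2 * (q A u).re := by rw [hxu, q_real_scale]
        have hqb : (q B x).re = t^2 * (q B u).re := by rw [hxu, q_real_scale]
        have hmin : c ≤ (q A u).re := hx₀min huS
        have hmax : |(q B u).re| ≤ b := hy₀max huS
        rw [hqa, hqb, abs_mul, abs_of_nonneg (sq_nonneg t)]
        have h1 : ε * |(q B u).re| ≤ ε * b :=
          mul_le_mul_of_nonneg_left hmax hεpos.le
        have h2 : ε * b ≤ c := by
          rw [hε, div_mul_eq_mul_div, div_le_iff₀ (by linarith)]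
          nlinarith
        calc ε * (t^2 * |(q B u).re|) = t^2 * (ε * |(q B u).re|) := by ring
          _ ≤ t^2 * c := by nlinarith
          _ ≤ t^2 * (q A u).re := by nlinarith [sq_nonneg t]
    first
    | (refine posSemidef_of_re (hA.isHermitian.sub (herm_real_smul hB ε)) fun x => ?_
       have hq : (q (A - (ε:ℂ) • B) x).re = (q A x).re - ε * (q B x).re := by
         unfold q
         rw [sub_mulVec, dotProduct_sub, Complex.sub_re, smul_mulVec, dotProduct_smul]
         simp [Complex.re_ofReal_mul]
       rw [hq]
       have h3 : ε * (q B x).re ≤ ε * |(q B x).re| :=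
         mul_le_mul_of_nonneg_left (le_abs_self _) hεpos.le
       linarith [key x])
    | (refine posSemidef_of_re (hA.isHermitian.add (herm_real_smul hB ε)) fun x => ?_
       have hq : (q (A + (ε:ℂ) • B) x).re = (q A x).re + ε * (q B x).re := by
         unfold q
         rw [add_mulVec, dotProduct_add, Complex.add_re, smul_mulVec, dotProduct_smul]
         simp [Complex.re_ofReal_mul]
       rw [hq]
       have h3 : -(ε * (q B x).re) ≤ ε * |(q B x).re| := by
         rw [← mul_neg]
         exact mul_le_mul_of_nonneg_left (neg_le_abs _) hεpos.le
       linarith [key x]) }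

attribute [local instance] Matrix.normedAddCommGroup Matrix.normedSpace

lemma continuous_q_left (x : Fin D → ℂ) :
    Continuous fun P : Matrix (Fin D) (Fin D) ℂ => q P x := by
  simp only [q, dotProduct, Matrix.mulVec, Pi.star_apply]
  refine continuous_finset_sum _ fun i _ => Continuous.mul continuous_const ?_
  exact continuous_finset_sum _ fun j _ => (continuous_id.matrix_elem i j).mul continuous_const

lemma isClosed_nonnegC : IsClosed {z : ℂ | 0 ≤ z} := by
  have h : {z : ℂ | 0 ≤ z} = {z | 0 ≤ z.re} ∩ {z | z.im = 0} := by
    ext z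
    simp only [Set.mem_setOf_eq, Set.mem_inter_iff, Complex.le_def]
    constructor
    · rintro ⟨h1, h2⟩; exact ⟨by simpa using h1, by simpa using h2.symm⟩
    · rintro ⟨h1, h2⟩; exact ⟨by simpa using h1, by simp [h2]⟩
  rw [h]
  exact (isClosed_le continuous_const Complex.continuous_re).inter
    (isClosed_eq Complex.continuous_im continuous_const)

lemma isClosed_psd : IsClosed {P : Matrix (Fin D) (Fin D) ℂ | P.PosSemidef} := by
  have h : {P : Matrix (Fin D) (Fin D) ℂ | P.PosSemidef}
      = {P : Matrix (Fin D) (Fin D) ℂ | Pᴴ = P} ∩ ⋂ x : Fin D → ℂ, {P | 0 ≤ q P x} := by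
    ext P
    simp only [Set.mem_setOf_eq, Set.mem_inter_iff, Set.mem_iInter]
    exact ⟨fun hh => ⟨hh.1, hh.dotProduct_mulVec_nonneg⟩, fun hh => PosSemidef.of_dotProduct_mulVec_nonneg hh.1 hh.2⟩
  rw [h]
  refine (isClosed_eq (continuous_id.matrix_conjTranspose) continuous_id).inter ?_
  exact isClosed_iInter fun x => isClosed_nonnegC.preimage (continuous_q_left x)

lemma continuous_trace' : Continuous fun P : Matrix (Fin D) (Fin D) ℂ => P.trace := by
  simp only [Matrix.trace, Matrix.diag]
  exact continuous_finset_sum _ fun i _ => continuous_id.matrix_elem i i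

lemma psd_diag_re_nonneg {P : Matrix (Fin D) (Fin D) ℂ} (hP : P.PosSemidef) (i : Fin D) :
    0 ≤ (P i i).re := by
  have := psd_q_re_nonneg hP (Pi.single i 1)
  rwa [q_single] at this

lemma trace_re_eq_sum (P : Matrix (Fin D) (Fin D) ℂ) :
    P.trace.re = ∑ i, (P i i).re := by
  simp [Matrix.trace, Matrix.diag, Complex.re_sum]

lemma psd_entry_norm_le {P : Matrix (Fin D) (Fin D) ℂ} (hP : P.PosSemidef) (i j : Fin D) :
    ‖P i j‖ ≤ P.trace.re := by
  have hdiag : ∀ k, 0 ≤ (P k k).re := psd_diag_re_nonneg hP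
  have htr : P.trace.re = ∑ k, (P k k).re := trace_re_eq_sum P
  have hi : (P i i).re ≤ P.trace.re := by
    rw [htr]
    exact Finset.single_le_sum (fun k _ => hdiag k) (Finset.mem_univ i)
  have hj : (P j j).re ≤ P.trace.re := by
    rw [htr]
    exact Finset.single_le_sum (fun k _ => hdiag k) (Finset.mem_univ j)
  by_cases hα : P i j = 0
  · rw [hα, norm_zero]
    rw [htr]
    exact Finset.sum_nonneg fun k _ => hdiag k
  · set α := P i j with hαdef
    have hji : P j i = star α := by
      have h := congrFun (congrFun hP.1 i) j
      rw [conjTranspose_apply] at h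
      rw [hαdef, ← h, star_star]
    have hna : ‖α‖ ≠ 0 := norm_ne_zero_iff.mpr hα
    set c : ℝ := ‖α‖ with hcdef
    have hc0 : ((c:ℝ):ℂ) ≠ 0 := by exact_mod_cast hna
    set a : ℂ := -((c⁻¹ : ℝ) : ℂ) * star α with ha
    have hq := psd_q_re_nonneg hP (pvec i j a)
    rw [q_single_pair] at hq
    have hsq : α * star α = ((c:ℝ):ℂ)^2 := by
      rw [Complex.star_def, Complex.mul_conj, Complex.normSq_eq_norm_sq]
      norm_cast
    have hstar : star a = -((c⁻¹ : ℝ) : ℂ) * α := by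
      rw [ha]
      simp [Complex.star_def, Complex.conj_ofReal]
    have hci : ((c⁻¹:ℝ):ℂ) * ((c:ℝ):ℂ)^2 = ((c:ℝ):ℂ) := by
      push_cast
      field_simp
    have t1 : a * α = -((c:ℝ):ℂ) := by
      rw [ha]
      calc -((c⁻¹:ℝ):ℂ) * star α * α = -(((c⁻¹:ℝ):ℂ) * (α * star α)) := by ring
        _ = -(((c⁻¹:ℝ):ℂ) * ((c:ℝ):ℂ)^2) := by rw [hsq]
        _ = -((c:ℝ):ℂ) := by rw [hci]
    have t2 : star a * star α = -((c:ℝ):ℂ) := by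
      rw [hstar]
      calc -((c⁻¹:ℝ):ℂ) * α * star α = -(((c⁻¹:ℝ):ℂ) * (α * star α)) := by ring
        _ = -(((c⁻¹:ℝ):ℂ) * ((c:ℝ):ℂ)^2) := by rw [hsq]
        _ = -((c:ℝ):ℂ) := by rw [hci]
    have t3 : star a * a = 1 := by
      rw [hstar, ha]
      calc -((c⁻¹:ℝ):ℂ) * α * (-((c⁻¹:ℝ):ℂ) * star α)
          = ((c⁻¹:ℝ):ℂ)^2 * (α * star α) := by ring
        _ = ((c⁻¹:ℝ):ℂ)^2 * ((c:ℝ):ℂ)^2 := by rw [hsq]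
        _ = 1 := by
            push_cast
            field_simp
    have key : P i i + a * P i j + star a * P j i + star a * a * P j j
        = P i i + P j j - 2*((c:ℝ):ℂ) := by
      rw [hji, ← hαdef, t1, t2, t3]
      ring
    rw [key] at hq
    rw [Complex.sub_re, Complex.add_re] at hq
    have h2c : ((2:ℂ)*((c:ℝ):ℂ)).re = 2*c := by norm_cast
    rw [h2c] at hq
    linarith

lemma trace_psd_re_nonneg {P : Matrix (Fin D) (Fin D) ℂ} (hP : P.PosSemidef) :
    0 ≤ P.trace.re := by
  rw [trace_re_eq_sum]
  exact Finset.sum_nonneg fun k _ => psd_diag_re_nonneg hP k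

lemma trace_pd_re_pos (hD : 0 < D) {P : Matrix (Fin D) (Fin D) ℂ} (hP : P.PosDef) :
    0 < P.trace.re := by
  haveI : Nonempty (Fin D) := ⟨⟨0, hD⟩⟩
  rw [trace_re_eq_sum]
  refine Finset.sum_pos (fun k _ => ?_) Finset.univ_nonempty
  have hsne : (Pi.single k 1 : Fin D → ℂ) ≠ 0 := by
    intro h
    have := congrFun h k
    simp at this
  have := hP.dotProduct_mulVec_pos hsne
  rw [Complex.lt_def] at this
  have h2 := this.1
  rw [Complex.zero_re] at h2
  have hq : star (Pi.single k (1:ℂ)) ⬝ᵥ P.mulVec (Pi.single k 1) = P k k := q_single P k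
  rw [hq] at h2
  exact h2

lemma herm_diag_im_zero {P : Matrix (Fin D) (Fin D) ℂ} (hP : P.IsHermitian) (i : Fin D) :
    (P i i).im = 0 := by
  have h := congrFun (congrFun hP.eq i) i
  rw [conjTranspose_apply] at h
  rw [← Complex.conj_eq_iff_im]
  exact h

lemma trace_herm_real {P : Matrix (Fin D) (Fin D) ℂ} (hP : P.IsHermitian) :
    P.trace = ((P.trace.re : ℝ) : ℂ) := by
  refine Complex.ext (by simp) ?_
  rw [Complex.ofReal_im]
  have : P.trace.im = ∑ i, (P i i).im := by
    simp [Matrix.trace, Matrix.diag, Complex.im_sum]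
  rw [this]
  exact Finset.sum_eq_zero fun i _ => herm_diag_im_zero hP i

end PF10

attribute [local instance] Matrix.normedAddCommGroup Matrix.normedSpace

open PF10 in
theorem stmt_10 {D : ℕ} (hD : 0 < D)
    (Φ : Matrix (Fin D) (Fin D) ℂ →ₗ[ℂ] Matrix (Fin D) (Fin D) ℂ)
    (hstrict : ∀ P : Matrix (Fin D) (Fin D) ℂ, P.PosSemidef → P ≠ 0 → (Φ P).PosDef) :
    ∃ (R : Matrix (Fin D) (Fin D) ℂ) (lam : ℝ),
      0 < lam ∧ R.PosDef ∧ R.trace = 1 ∧ Φ R = (lam : ℂ) • R ∧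
      -- lam is the spectral radius of Φ
      (lam : ℂ) ∈ spectrum ℂ (Φ : Module.End ℂ (Matrix (Fin D) (Fin D) ℂ)) ∧
      ∀ z ∈ spectrum ℂ (Φ : Module.End ℂ (Matrix (Fin D) (Fin D) ℂ)), ‖z‖ ≤ lam := by
  classical
  haveI hProper : ProperSpace (Matrix (Fin D) (Fin D) ℂ) :=
    FiniteDimensional.proper_rclike ℂ _
  have hΦc : Continuous fun P : Matrix (Fin D) (Fin D) ℂ => Φ P :=
    Φ.continuous_of_finiteDimensional
  have hpsd : ∀ P : Matrix (Fin D) (Fin D) ℂ, P.PosSemidef → (Φ P).PosSemidef := by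
    intro P hP
    by_cases h : P = 0
    · subst h; rw [map_zero]; exact Matrix.PosSemidef.zero
    · exact (hstrict P hP h).posSemidef
  -- the set of density matrices
  set Dset : Set (Matrix (Fin D) (Fin D) ℂ) := {P | P.PosSemidef ∧ P.trace = 1} with hDset
  have hDclosed : IsClosed Dset :=
    isClosed_psd.inter (isClosed_eq continuous_trace' continuous_const)
  have hDbdd : Dset ⊆ Metric.closedBall 0 1 := by
    intro P hP
    rw [Metric.mem_closedBall, dist_zero_right, Matrix.norm_le_iff zero_le_one]
    intro i j
    have h := psd_entry_norm_le hP.1 i j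
    rw [hP.2] at h
    simpa using h
  have hDcomp : IsCompact Dset :=
    (isCompact_closedBall 0 1).of_isClosed_subset hDclosed hDbdd
  have hP₀mem : (((D:ℝ)⁻¹ : ℝ) : ℂ) • (1 : Matrix (Fin D) (Fin D) ℂ) ∈ Dset := by
    refine ⟨psd_smul Matrix.PosSemidef.one (by positivity), ?_⟩
    rw [trace_smul, trace_one, smul_eq_mul]
    have hDne0 : (D:ℝ) ≠ 0 := Nat.cast_ne_zero.mpr hD.ne'
    rw [← Complex.ofReal_natCast]
    norm_cast
    simp [Fintype.card_fin]
    field_simp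
  have hDne : Dset.Nonempty := ⟨_, hP₀mem⟩
  obtain ⟨Pm, hPmD, hPmmax⟩ := hDcomp.exists_isMaxOn hDne
    ((Complex.continuous_re.comp (continuous_trace'.comp hΦc)).continuousOn)
  set M₀ := ((Φ Pm).trace).re with hM₀
  -- the Collatz-Wielandt set
  set K : Set (ℝ × Matrix (Fin D) (Fin D) ℂ) :=
    {p | p.2.PosSemidef ∧ p.2.trace = 1 ∧ 0 ≤ p.1 ∧ (Φ p.2 - (p.1:ℂ) • p.2).PosSemidef} with hK
  have hKclosed : IsClosed K := by
    have hKeq : K = (Prod.snd ⁻¹' {P : Matrix (Fin D) (Fin D) ℂ | P.PosSemidef})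
        ∩ ((fun p : ℝ × Matrix (Fin D) (Fin D) ℂ => p.2.trace) ⁻¹' {1})
        ∩ (Prod.fst ⁻¹' Set.Ici (0:ℝ))
        ∩ ((fun p : ℝ × Matrix (Fin D) (Fin D) ℂ => Φ p.2 - (p.1:ℂ) • p.2)
            ⁻¹' {P : Matrix (Fin D) (Fin D) ℂ | P.PosSemidef}) := by
      ext p
      simp only [hK, Set.mem_setOf_eq, Set.mem_inter_iff, Set.mem_preimage,
        Set.mem_singleton_iff, Set.mem_Ici]
      tauto
    rw [hKeq]
    refine ((((isClosed_psd.preimage continuous_snd).inter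
      (isClosed_eq (continuous_trace'.comp continuous_snd) continuous_const)).inter
      (isClosed_Ici.preimage continuous_fst)).inter
      (isClosed_psd.preimage ?_))
    exact (hΦc.comp continuous_snd).sub
      ((Complex.continuous_ofReal.comp continuous_fst).smul continuous_snd)
  have hKsub : K ⊆ (Set.Icc (0:ℝ) M₀) ×ˢ Dset := by
    rintro ⟨t, P⟩ ⟨h1, h2, h3, h4⟩
    have hPD : P ∈ Dset := ⟨h1, h2⟩
    refine ⟨⟨h3, ?_⟩, hPD⟩
    have htr := trace_psd_re_nonneg h4
    rw [trace_sub, trace_smul, h2, smul_eq_mul, mul_one, Complex.sub_re,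
      Complex.ofReal_re] at htr
    have hb : ((Φ P).trace).re ≤ M₀ := hPmmax hPD
    linarith
  have hKcomp : IsCompact K :=
    (isCompact_Icc.prod hDcomp).of_isClosed_subset hKclosed hKsub
  have hKne : ((0:ℝ), (((D:ℝ)⁻¹ : ℝ) : ℂ) • (1 : Matrix (Fin D) (Fin D) ℂ)) ∈ K := by
    refine ⟨hP₀mem.1, hP₀mem.2, le_refl 0, ?_⟩
    show (Φ _ - ((0:ℝ):ℂ) • _).PosSemidef
    rw [Complex.ofReal_zero, zero_smul, sub_zero]
    exact hpsd _ hP₀mem.1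
  obtain ⟨⟨lam, R⟩, hmemK, hmax⟩ := hKcomp.exists_isMaxOn ⟨_, hKne⟩ continuous_fst.continuousOn
  have hRpsd : R.PosSemidef := hmemK.1
  have hRtr : R.trace = 1 := hmemK.2.1
  have hlam0 : (0:ℝ) ≤ lam := hmemK.2.2.1
  have hEigPsd : (Φ R - (lam:ℂ) • R).PosSemidef := hmemK.2.2.2
  have hRne : R ≠ 0 := by
    intro h
    rw [h, trace_zero] at hRtr
    exact one_ne_zero hRtr.symm
  -- the eigen-equation
  have heq : Φ R = (lam:ℂ) • R := by
    by_contra hne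
    have hQ'ne : Φ R - (lam:ℂ) • R ≠ 0 := sub_ne_zero_of_ne hne
    have hQpd : (Φ R).PosDef := hstrict R hRpsd hRne
    obtain ⟨ε, hεpos, hεsub, _⟩ := exists_eps hD (hstrict _ hEigPsd hQ'ne) hQpd.isHermitian
    have hQtrpos : 0 < ((Φ R).trace).re := trace_pd_re_pos hD hQpd
    set s : ℝ := (((Φ R).trace).re)⁻¹ with hs
    have hspos : 0 < s := inv_pos.mpr hQtrpos
    have hQtr : (Φ R).trace = ((((Φ R).trace).re : ℝ) : ℂ) := trace_herm_real hQpd.isHermitian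
    have hmem2 : ((lam + ε : ℝ), (s:ℂ) • Φ R) ∈ K := by
      refine ⟨psd_smul hQpd.posSemidef hspos.le, ?_, ?_, ?_⟩
      · show ((s:ℂ) • Φ R).trace = 1
        rw [trace_smul, hQtr, smul_eq_mul, ← Complex.ofReal_mul, hs]
        rw [inv_mul_cancel₀ hQtrpos.ne']
        exact Complex.ofReal_one
      · show (0:ℝ) ≤ lam + ε
        linarith
      · show (Φ ((s:ℂ) • Φ R) - (((lam + ε : ℝ)):ℂ) • ((s:ℂ) • Φ R)).PosSemidef
        have hcalc : Φ ((s:ℂ) • Φ R) - (((lam + ε : ℝ)):ℂ) • ((s:ℂ) • Φ R)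
            = (s:ℂ) • (Φ (Φ R - (lam:ℂ) • R) - (ε:ℂ) • (Φ R)) := by
          rw [Φ.map_smul, map_sub Φ, Φ.map_smul]
          push_cast
          module
        rw [hcalc]
        exact psd_smul hεsub hspos.le
    have hle : lam + ε ≤ lam := hmax hmem2
    linarith
  have hΦRpd : (Φ R).PosDef := hstrict R hRpsd hRne
  have hlampos : 0 < lam := by
    have htr := trace_pd_re_pos hD hΦRpd
    rw [heq, trace_smul, hRtr, smul_eq_mul, mul_one, Complex.ofReal_re] at htr
    exact htr
  have hRpd : R.PosDef := by
    have h := pd_smul hΦRpd (inv_pos.mpr hlampos)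
    rw [heq, smul_smul, ← Complex.ofReal_mul, inv_mul_cancel₀ hlampos.ne',
      Complex.ofReal_one, one_smul] at h
    exact h
  have hEigval : Module.End.HasEigenvalue (Φ : Module.End ℂ (Matrix (Fin D) (Fin D) ℂ)) (lam:ℂ) :=
    Module.End.hasEigenvalue_of_hasEigenvector
      ⟨Module.End.mem_eigenspace_iff.mpr heq, hRne⟩
  refine ⟨R, lam, hlampos, hRpd, hRtr, heq, hEigval.mem_spectrum, ?_⟩
  -- spectral bound
  intro z hz
  have hzEig : Module.End.HasEigenvalue (Φ : Module.End ℂ (Matrix (Fin D) (Fin D) ℂ)) z :=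
    Module.End.HasEigenvalue.of_mem_spectrum hz
  obtain ⟨X, hXv⟩ := hzEig.exists_hasEigenvector
  have hXne : X ≠ 0 := hXv.2
  have hXeq : Φ X = z • X := hXv.apply_eq_smul
  -- Hermitian decomposition X = H + i K₀
  set H : Matrix (Fin D) (Fin D) ℂ := (((2:ℝ)⁻¹ : ℝ):ℂ) • (X + Xᴴ) with hH
  set K₀ : Matrix (Fin D) (Fin D) ℂ := (((2:ℝ)⁻¹ : ℝ):ℂ) • (Complex.I • (Xᴴ - X)) with hK₀
  have hHh : H.IsHermitian := by
    refine herm_real_smul ?_ _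
    show (X + Xᴴ)ᴴ = X + Xᴴ
    rw [conjTranspose_add, conjTranspose_conjTranspose]
    exact add_comm _ _
  have hK₀h : K₀.IsHermitian := by
    refine herm_real_smul ?_ _
    show (Complex.I • (Xᴴ - X))ᴴ = Complex.I • (Xᴴ - X)
    rw [conjTranspose_smul, conjTranspose_sub, conjTranspose_conjTranspose,
      Complex.star_def, Complex.conj_I]
    module
  have hXd : X = H + Complex.I • K₀ := by
    rw [hH, hK₀]
    have hkey : Complex.I • ((((2:ℝ)⁻¹ : ℝ):ℂ) • (Complex.I • (Xᴴ - X)))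
        = (((2:ℝ)⁻¹ : ℝ):ℂ) • (-(Xᴴ - X)) := by
      rw [smul_smul, smul_smul]
      have hco : Complex.I * (((2:ℝ)⁻¹ : ℝ):ℂ) * Complex.I = -((((2:ℝ)⁻¹ : ℝ)):ℂ) := by
        linear_combination (((2:ℝ)⁻¹ : ℝ):ℂ) * Complex.I_mul_I
      rw [hco, neg_smul, smul_neg, ← smul_neg]
    rw [hkey]
    push_cast
    module
  -- domination by R
  have hdom : ∀ A : Matrix (Fin D) (Fin D) ℂ, A.IsHermitian →
      ∃ cc : ℝ, 0 ≤ cc ∧ ((cc:ℂ) • R - A).PosSemidef ∧ ((cc:ℂ) • R + A).PosSemidef := by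
    intro A hA
    obtain ⟨ε, hε, h1, h2⟩ := exists_eps hD hRpd hA
    refine ⟨ε⁻¹, (inv_pos.mpr hε).le, ?_, ?_⟩
    · have h := psd_smul h1 (inv_pos.mpr hε).le
      have e : ((ε⁻¹:ℝ):ℂ) • (R - (ε:ℂ) • A) = ((ε⁻¹:ℝ):ℂ) • R - A := by
        rw [smul_sub, smul_smul, ← Complex.ofReal_mul, inv_mul_cancel₀ hε.ne',
          Complex.ofReal_one, one_smul]
      rwa [e] at h
    · have h := psd_smul h2 (inv_pos.mpr hε).le
      have e : ((ε⁻¹:ℝ):ℂ) • (R + (ε:ℂ) • A) = ((ε⁻¹:ℝ):ℂ) • R + A := by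
        rw [smul_add, smul_smul, ← Complex.ofReal_mul, inv_mul_cancel₀ hε.ne',
          Complex.ofReal_one, one_smul]
      rwa [e] at h
  obtain ⟨cH, hcH0, hcH1, hcH2⟩ := hdom H hHh
  obtain ⟨cK, hcK0, hcK1, hcK2⟩ := hdom K₀ hK₀h
  -- Φ preserves hermitian matrices
  have hmapherm : ∀ A : Matrix (Fin D) (Fin D) ℂ, A.IsHermitian → (Φ A).IsHermitian := by
    intro A hA
    obtain ⟨ε, hε, h1, h2⟩ := exists_eps hD Matrix.PosDef.one hA
    have hdec : Φ A = ((ε⁻¹:ℝ):ℂ) • Φ (1 + (ε:ℂ) • A) - ((ε⁻¹:ℝ):ℂ) • Φ 1 := by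
      rw [← Φ.map_smul, ← Φ.map_smul, ← map_sub Φ]
      congr 1
      rw [smul_add, smul_smul, ← Complex.ofReal_mul, inv_mul_cancel₀ hε.ne',
        Complex.ofReal_one, one_smul]
      abel
    rw [hdec]
    refine Matrix.IsHermitian.sub ?_ ?_
    · exact (psd_smul (hpsd _ h2) (inv_pos.mpr hε).le).1
    · exact (psd_smul (hpsd _ Matrix.PosSemidef.one) (inv_pos.mpr hε).le).1
  -- iterates of Φ
  have hiter_herm : ∀ n (A : Matrix (Fin D) (Fin D) ℂ), A.IsHermitian →
      ((⇑Φ)^[n] A).IsHermitian := by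
    intro n
    induction n with
    | zero => intro A hA; simpa using hA
    | succ n ih =>
        intro A hA
        rw [Function.iterate_succ_apply']
        exact hmapherm _ (ih A hA)
  have hiterX : ∀ n, (⇑Φ)^[n] X = (z ^ n) • X := by
    intro n
    induction n with
    | zero => simp
    | succ n ih =>
        rw [Function.iterate_succ_apply', ih, Φ.map_smul, hXeq, smul_smul, ← pow_succ]
  have hiter_add_smul : ∀ n (A B : Matrix (Fin D) (Fin D) ℂ) (c : ℂ),
      (⇑Φ)^[n] (A + c • B) = (⇑Φ)^[n] A + c • (⇑Φ)^[n] B := by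
    intro n
    induction n with
    | zero => intro A B c; simp
    | succ n ih =>
        intro A B c
        rw [Function.iterate_succ_apply', ih, map_add Φ, Φ.map_smul,
          Function.iterate_succ_apply', Function.iterate_succ_apply']
  have hiter_bound : ∀ (A : Matrix (Fin D) (Fin D) ℂ) (cc : ℝ),
      ((cc:ℂ) • R - A).PosSemidef → ((cc:ℂ) • R + A).PosSemidef → ∀ n,
      ((((cc * lam^n : ℝ)):ℂ) • R - (⇑Φ)^[n] A).PosSemidef
        ∧ ((((cc * lam^n : ℝ)):ℂ) • R + (⇑Φ)^[n] A).PosSemidef := by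
    intro A cc h1 h2 n
    induction n with
    | zero => simpa using ⟨h1, h2⟩
    | succ n ih =>
        have e : ∀ B : Matrix (Fin D) (Fin D) ℂ,
            Φ (((cc * lam^n : ℝ):ℂ) • R) = ((cc * lam^(n+1) : ℝ):ℂ) • R := by
          intro B
          rw [Φ.map_smul, heq, smul_smul, ← Complex.ofReal_mul]
          ring_nf
        constructor
        · have h := hpsd _ ih.1
          rw [map_sub Φ, e 0, ← Function.iterate_succ_apply' (⇑Φ) n A] at h
          exact h
        · have h := hpsd _ ih.2
          rw [map_add Φ, e 0, ← Function.iterate_succ_apply' (⇑Φ) n A] at h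
          exact h
  -- choose a nonzero entry of X
  obtain ⟨i, j, hij⟩ : ∃ i j, X i j ≠ 0 := by
    by_contra h
    push_neg at h
    exact hXne (by ext i j; simpa using h i j)
  set T : ℝ := (q R (pvec i j 1)).re + (q R (pvec i j (-1))).re
      + (q R (pvec i j (-Complex.I))).re + (q R (pvec i j Complex.I)).re with hT
  have hqsmul_re : ∀ (r : ℝ) (v : Fin D → ℂ), (q ((r:ℂ) • R) v).re = r * (q R v).re := by
    intro r v
    rw [q_smul, Complex.re_ofReal_mul]
  have hbound : ∀ n, ‖z‖^n * ‖X i j‖ ≤ (cH + cK) * T * lam^n := by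
    intro n
    have hlamn : (0:ℝ) ≤ lam ^ n := pow_nonneg hlampos.le n
    have hHn := hiter_bound H cH hcH1 hcH2 n
    have hKn := hiter_bound K₀ cK hcK1 hcK2 n
    have hSH : ((((cH * lam^n : ℝ)):ℂ) • R).PosSemidef :=
      psd_smul hRpd.posSemidef (by positivity)
    have hSK : ((((cK * lam^n : ℝ)):ℂ) • R).PosSemidef :=
      psd_smul hRpd.posSemidef (by positivity)
    have hHb := entry_bound hSH (hiter_herm n H hHh) hHn.1 hHn.2 i j
    have hKb := entry_bound hSK (hiter_herm n K₀ hK₀h) hKn.1 hKn.2 i j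
    rw [hqsmul_re, hqsmul_re, hqsmul_re, hqsmul_re] at hHb hKb
    have hHb' : ‖((⇑Φ)^[n] H) i j‖ ≤ (cH * lam^n) * T := by
      rw [hT]; linarith
    have hKb' : ‖((⇑Φ)^[n] K₀) i j‖ ≤ (cK * lam^n) * T := by
      rw [hT]; linarith
    have hdecn : (⇑Φ)^[n] X = (⇑Φ)^[n] H + Complex.I • (⇑Φ)^[n] K₀ := by
      conv_lhs => rw [hXd]
      exact hiter_add_smul n H K₀ Complex.I
    have hentry : (z^n • X) i j = ((⇑Φ)^[n] H) i j + Complex.I * ((⇑Φ)^[n] K₀) i j := by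
      rw [← hiterX n, hdecn]
      simp [Matrix.add_apply]
    have hnorm : ‖z‖^n * ‖X i j‖ = ‖(z^n • X) i j‖ := by
      rw [Matrix.smul_apply, smul_eq_mul, norm_mul, norm_pow]
    rw [hnorm, hentry]
    calc ‖((⇑Φ)^[n] H) i j + Complex.I * ((⇑Φ)^[n] K₀) i j‖
        ≤ ‖((⇑Φ)^[n] H) i j‖ + ‖Complex.I * ((⇑Φ)^[n] K₀) i j‖ :=
          norm_add_le _ _
      _ = ‖((⇑Φ)^[n] H) i j‖ + ‖((⇑Φ)^[n] K₀) i j‖ := by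
          rw [norm_mul, Complex.norm_I, one_mul]
      _ ≤ (cH * lam^n) * T + (cK * lam^n) * T := add_le_add hHb' hKb'
      _ = (cH + cK) * T * lam^n := by ring
  by_contra hgt
  push_neg at hgt
  have h1lt : 1 < ‖z‖ / lam := (one_lt_div hlampos).mpr hgt
  have hXijpos : 0 < ‖X i j‖ := norm_pos_iff.mpr hij
  obtain ⟨n, hn⟩ := pow_unbounded_of_one_lt (((cH + cK) * T) / ‖X i j‖) h1lt
  rw [div_pow, div_lt_div_iff₀ hXijpos (by positivity)] at hn
  have hb := hbound n
  linarith
end
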